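/- Let t, τ ∈ ℝ with t ≠ 0 and τ ≠ 0, and suppose every loss x ↦ f(x;θ) is differentiable in θ. Then the hierarchical multi-objective tilted loss J̃(t,τ;·) is differentiable with ∇_θ J̃(t,τ;θ) = Σ_{g∈[G]} Σ_{x∈g} w_{g,x}(t,τ;θ)·∇_θ f(x;θ), where w_{g,x}(t,τ;θ) = [((1/|g|)·Σ_{y∈g} exp(τ·f(y;θ)))^{t/τ − 1} · exp(τ·f(x;θ))] / [Σ_{g'∈[G]} |g'|·((1/|g'|)·Σ_{y∈g'} exp(τ·f(y;θ)))^{t/τ}]. -/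

import Mathlib

open Real Finset

set_option maxHeartbeats 1000000

private lemma aux_scalar (t τ Nr m s B a e : ℝ) (ht : t ≠ 0) (hτ : τ ≠ 0) (hN : Nr ≠ 0)
    (hm : m ≠ 0) (hs : s ≠ 0) (hB : B ≠ 0) :
    a / s * e / B = 1/t * ((1/Nr * B)⁻¹ * (1/Nr * (m * (a * (t * (1/τ * (s⁻¹ * (1/m * (e * τ))))))))) := by
  field_simp

/-- **Hierarchical multi-objective tilted gradient.** Samples are partitioned into `G` groups,
group `g` having `n g > 0` samples, with total size `N = Σ_g n g`. The hierarchical tilted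
loss is `J̃(t,τ;θ) = (1/t)·log((1/N)·Σ_g |g|·exp(t·R̃_g(τ;θ)))` with group-level tilted loss
`R̃_g(τ;θ) = (1/τ)·log((1/|g|)·Σ_{x∈g} exp(τ·f(x;θ)))`. If each sample loss is differentiable
at `θ` with gradient `grad g x`, then `J̃(t,τ;·)` is differentiable at `θ` with gradient
`Σ_g Σ_{x∈g} w_{g,x}(t,τ;θ) • grad g x`, where
`w_{g,x} = (S g)^{t/τ−1}·exp(τ·f(x;θ)) / Σ_{g'} |g'|·(S g')^{t/τ}` and
`S g = (1/|g|)·Σ_{y∈g} exp(τ·f(y;θ))`. -/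
theorem hierarchical_tilted_gradient {d G : ℕ}
    (n : Fin G → ℕ) (hn : ∀ g, 0 < n g)
    (f : (g : Fin G) → Fin (n g) → EuclideanSpace ℝ (Fin d) → ℝ)
    (t τ : ℝ) (ht : t ≠ 0) (hτ : τ ≠ 0)
    (θ : EuclideanSpace ℝ (Fin d))
    (grad : (g : Fin G) → Fin (n g) → EuclideanSpace ℝ (Fin d))
    (hf : ∀ g x, HasGradientAt (f g x) (grad g x) θ)
    (S : Fin G → ℝ)
    (hS : ∀ g, S g = (1 / (n g : ℝ)) * ∑ y, Real.exp (τ * f g y θ))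
    (w : (g : Fin G) → Fin (n g) → ℝ)
    (hw : ∀ g x, w g x =
      (S g ^ (t / τ - 1) * Real.exp (τ * f g x θ)) /
        ∑ g', (n g' : ℝ) * S g' ^ (t / τ)) :
    HasGradientAt
      (fun θ' => (1 / t) * Real.log ((1 / ((∑ g', (n g' : ℕ) : ℕ) : ℝ)) *
        ∑ g, (n g : ℝ) * Real.exp (t *
          ((1 / τ) * Real.log ((1 / (n g : ℝ)) * ∑ x, Real.exp (τ * f g x θ'))))))
      (∑ g, ∑ x, w g x • grad g x) θ := by
  classical
  rcases Nat.eq_zero_or_pos G with hG | hG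
  · subst hG
    rw [hasGradientAt_iff_hasFDerivAt]
    simp only [Finset.univ_eq_empty, Finset.sum_empty, map_zero]
    exact hasFDerivAt_const _ _
  haveI : Nonempty (Fin G) := Fin.pos_iff_nonempty.mp hG
  have hGne : (Finset.univ : Finset (Fin G)).Nonempty := Finset.univ_nonempty
  have hS0 : ∀ g, 0 < S g := by
    intro g
    rw [hS g]
    haveI : Nonempty (Fin (n g)) := Fin.pos_iff_nonempty.mp (hn g)
    have h1 : 0 < ∑ y, Real.exp (τ * f g y θ) :=
      Finset.sum_pos (fun y _ => Real.exp_pos _) Finset.univ_nonempty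
    have h2 : (0:ℝ) < (n g : ℝ) := by exact_mod_cast hn g
    positivity
  set Nr : ℝ := ((∑ g', (n g' : ℕ) : ℕ) : ℝ) with hNr
  have hN0 : 0 < Nr := by
    rw [hNr]
    exact_mod_cast Finset.sum_pos (fun g _ => hn g) hGne
  set L : (g : Fin G) → Fin (n g) → EuclideanSpace ℝ (Fin d) →L[ℝ] ℝ :=
    fun g x => InnerProductSpace.toDual ℝ _ (grad g x) with hL
  have hfd : ∀ g x, HasFDerivAt (f g x) (L g x) θ := fun g x => (hf g x).hasFDerivAt
  have h2 : ∀ g, HasFDerivAt (fun θ' => (1/(n g:ℝ)) * ∑ x, Real.exp (τ * f g x θ'))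
      ((1/(n g:ℝ)) • ∑ x, Real.exp (τ * f g x θ) • (τ • L g x)) θ := fun g =>
    (HasFDerivAt.fun_sum (fun x _ => ((hfd g x).const_mul τ).exp)).const_mul _
  have hSne : ∀ g, (1/(n g:ℝ)) * ∑ x, Real.exp (τ * f g x θ) ≠ 0 := by
    intro g; rw [← hS g]; exact (hS0 g).ne'
  have h4 : ∀ g, HasFDerivAt (fun θ' => (n g : ℝ) * Real.exp (t *
        ((1 / τ) * Real.log ((1 / (n g : ℝ)) * ∑ x, Real.exp (τ * f g x θ')))))
      ((n g : ℝ) • (Real.exp (t * ((1 / τ) * Real.log ((1 / (n g : ℝ)) *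
          ∑ x, Real.exp (τ * f g x θ)))) •
        (t • ((1/τ) • (((1/(n g:ℝ)) * ∑ x, Real.exp (τ * f g x θ))⁻¹ •
          ((1/(n g:ℝ)) • ∑ x, Real.exp (τ * f g x θ) • (τ • L g x))))))) θ := fun g =>
    (((((h2 g).log (hSne g)).const_mul (1/τ)).const_mul t).exp).const_mul _
  have h5 := HasFDerivAt.fun_sum (fun g (_ : g ∈ Finset.univ) => h4 g)
  have hE : ∀ g, Real.exp (t * ((1 / τ) * Real.log ((1 / (n g : ℝ)) *
      ∑ x, Real.exp (τ * f g x θ)))) = S g ^ (t/τ) := by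
    intro g
    rw [← hS g, Real.rpow_def_of_pos (hS0 g)]
    ring_nf
  have hB0 : (0:ℝ) < ∑ g, (n g : ℝ) * Real.exp (t * ((1 / τ) * Real.log ((1 / (n g : ℝ)) *
      ∑ x, Real.exp (τ * f g x θ)))) := by
    refine Finset.sum_pos (fun g _ => ?_) hGne
    have h2 : (0:ℝ) < (n g : ℝ) := by exact_mod_cast hn g
    positivity
  have hVne : (1 / Nr) * ∑ g, (n g : ℝ) * Real.exp (t * ((1 / τ) * Real.log ((1 / (n g : ℝ)) *
      ∑ x, Real.exp (τ * f g x θ)))) ≠ 0 := by positivity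
  have h7 := ((h5.const_mul (1/Nr)).log hVne).const_mul (1/t)
  rw [hasGradientAt_iff_hasFDerivAt]
  have key : (InnerProductSpace.toDual ℝ (EuclideanSpace ℝ (Fin d)))
      (∑ g, ∑ x, w g x • grad g x) =
      (1/t) • (((1 / Nr) * ∑ g, (n g : ℝ) * Real.exp (t * ((1 / τ) * Real.log ((1 / (n g : ℝ)) *
        ∑ x, Real.exp (τ * f g x θ)))))⁻¹ •
      ((1/Nr) • ∑ g, (n g : ℝ) • (Real.exp (t * ((1 / τ) * Real.log ((1 / (n g : ℝ)) *
          ∑ x, Real.exp (τ * f g x θ)))) •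
        (t • ((1/τ) • (((1/(n g:ℝ)) * ∑ x, Real.exp (τ * f g x θ))⁻¹ •
          ((1/(n g:ℝ)) • ∑ x, Real.exp (τ * f g x θ) • (τ • L g x)))))))) := by
    have hE' : ∀ g, Real.exp (t * (1 / τ * Real.log (S g))) = S g ^ (t/τ) := by
      intro g
      rw [Real.rpow_def_of_pos (hS0 g)]
      ring_nf
    have hBs0 : (0:ℝ) < ∑ g', (n g' : ℝ) * S g' ^ (t/τ) := by
      refine Finset.sum_pos (fun g _ => ?_) hGne
      have h2 : (0:ℝ) < (n g : ℝ) := by exact_mod_cast hn g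
      have := Real.rpow_pos_of_pos (hS0 g) (t/τ)
      positivity
    simp only [map_sum, map_smul]
    simp only [← hS, hE']
    simp only [Finset.smul_sum]
    simp only [smul_smul]
    refine Finset.sum_congr rfl fun g _ => Finset.sum_congr rfl fun x _ => ?_
    congr 1
    rw [hw g x, Real.rpow_sub_one (hS0 g).ne']
    have hng : ((n g : ℝ)) ≠ 0 := by exact_mod_cast (hn g).ne'
    have hNne : Nr ≠ 0 := hN0.ne'
    have hSgne : S g ≠ 0 := (hS0 g).ne'
    have hBne : (∑ g', (n g' : ℝ) * S g' ^ (t/τ)) ≠ 0 := hBs0.ne'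
    exact aux_scalar t τ Nr _ _ _ _ _ ht hτ hNne hng hSgne hBne
  rw [key]
  exact h7
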